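/- Let α be an inclusion assertion (positive or negative, concept or role) or a functionality assertion, and let I1, I2 be interpretations with disjoint support sets. Then I1 ⊎ I2 ⊨ α if and only if I1 ⊨ α and I2 ⊨ α. -/
import Mathlib


namespace DLLite

/-- The countably infinite domain of constants. -/
abbrev Δ : Type := ℕ
/-- Countably infinite set of concept names. -/
abbrev ConceptName : Type := ℕ
/-- Countably infinite set of role names. -/
abbrev RoleName : Type := ℕ

/-- An interpretation assigns a set of domain elements to each concept name
and a binary relation to each role name; constants are interpreted as themselves. -/
structure Interp where
  concept : ConceptName → Set Δ
  role : RoleName → Set (Δ × Δ)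

/-- Basic roles: `P` or `P⁻`. -/
inductive BasicRole where
  | pos (P : RoleName)
  | inv (P : RoleName)
deriving DecidableEq

def BasicRole.interp (R : BasicRole) (I : Interp) : Set (Δ × Δ) :=
  match R with
  | .pos P => I.role P
  | .inv P => {p | (p.2, p.1) ∈ I.role P}

/-- Basic concepts: `A` or `∃R`. -/
inductive BasicConcept where
  | atom (A : ConceptName)
  | ex (R : BasicRole)
deriving DecidableEq

def BasicConcept.interp (B : BasicConcept) (I : Interp) : Set Δ :=
  match B with
  | .atom A => I.concept A
  | .ex R => {o | ∃ o', (o, o') ∈ R.interp I}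

/-- DL-Lite_FR assertions: (negative) concept/role inclusions, functionality
assertions, and membership assertions. -/
inductive Assertion where
  | conceptIncl (B1 B2 : BasicConcept)
  | conceptDisj (B1 B2 : BasicConcept)
  | roleIncl (R1 R2 : BasicRole)
  | roleDisj (R1 R2 : BasicRole)
  | funct (R : BasicRole)
  | memberC (A : ConceptName) (a : Δ)
  | memberR (P : RoleName) (a b : Δ)
deriving DecidableEq

/-- Satisfaction of an assertion by an interpretation. -/
def Interp.sat (I : Interp) : Assertion → Prop
  | .conceptIncl B1 B2 => B1.interp I ⊆ B2.interp I
  | .conceptDisj B1 B2 => B1.interp I ∩ B2.interp I = ∅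
  | .roleIncl R1 R2 => R1.interp I ⊆ R2.interp I
  | .roleDisj R1 R2 => R1.interp I ∩ R2.interp I = ∅
  | .funct R => ∀ o o1 o2, (o, o1) ∈ R.interp I → (o, o2) ∈ R.interp I → o1 = o2
  | .memberC A a => a ∈ I.concept A
  | .memberR P a b => (a, b) ∈ I.role P

/-- TBox assertions: inclusion or functionality assertions. -/
def Assertion.isTBox : Assertion → Prop
  | .memberC _ _ => False
  | .memberR _ _ _ => False
  | _ => True

/-- Membership (ABox) assertions. -/
def Assertion.isMembership : Assertion → Prop
  | .memberC _ _ => True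
  | .memberR _ _ _ => True
  | _ => False

/-- The constants occurring in an assertion. -/
def Assertion.constants : Assertion → Set Δ
  | .memberC _ a => {a}
  | .memberR _ a b => {a, b}
  | _ => ∅

/-- A knowledge base: a finite set of assertions (TBox ∪ ABox). -/
abbrev KB := Finset Assertion

/-- The set of models of a KB. -/
def Mod (K : KB) : Set Interp := {I | ∀ a ∈ K, I.sat a}

/-- Interpretations falsifying at least one assertion of `K`. -/
def NonMod (K : KB) : Set Interp := {I | ∃ a ∈ K, ¬ I.sat a}

/-- The constants occurring in a KB. -/
def KB.constants (K : KB) : Set Δ := ⋃ a ∈ K, Assertion.constants a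

/-- Atoms: ground facts `A(o)` or `P(o,o')`. -/
inductive Atom where
  | c (A : ConceptName) (o : Δ)
  | r (P : RoleName) (o o' : Δ)
deriving DecidableEq

/-- The atom set of an interpretation. -/
def Interp.atoms (I : Interp) : Set Atom :=
  fun a => match a with
  | .c A o => o ∈ I.concept A
  | .r P o o' => (o, o') ∈ I.role P

/-- Concept or role names (symbols). -/
inductive SName where
  | c (A : ConceptName)
  | r (P : RoleName)
deriving DecidableEq

/-- Atom-based set distance: symmetric difference of atom sets. -/
def distASub (I J : Interp) : Set Atom := symmDiff I.atoms J.atoms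
/-- Atom-based cardinality distance. -/
noncomputable def distACard (I J : Interp) : ℕ∞ := (symmDiff I.atoms J.atoms).encard
/-- Symbol-based set distance: names interpreted differently. -/
def distSSub (I J : Interp) : Set SName :=
  fun n => match n with
  | .c A => I.concept A ≠ J.concept A
  | .r P => I.role P ≠ J.role P
/-- Symbol-based cardinality distance. -/
noncomputable def distSCard (I J : Interp) : ℕ∞ := (distSSub I J).encard

/-- Global expansion w.r.t. a distance. -/
def expGlobD {D : Type} [PartialOrder D] (dist : Interp → Interp → D)
    (M N : Set Interp) : Set Interp :=
  {J | J ∈ N ∧ ∃ I ∈ M, ∀ I' ∈ M, ∀ J' ∈ N, ¬ dist I' J' < dist I J}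

/-- Local expansion w.r.t. a distance. -/
def expLocD {D : Type} [PartialOrder D] (dist : Interp → Interp → D)
    (M N : Set Interp) : Set Interp :=
  {J | J ∈ N ∧ ∃ I ∈ M, ∀ J' ∈ N, ¬ dist I J' < dist I J}

inductive LocKind | glob | loc
inductive MeasKind | atoms | symbols
inductive OrdKind | subset | card

/-- The expansion operator on sets of interpretations for each of the
eight model-based semantics `X^y_z`. -/
def expansionSet : LocKind → MeasKind → OrdKind → Set Interp → Set Interp → Set Interp
  | .glob, .atoms, .subset => expGlobD distASub
  | .glob, .atoms, .card => expGlobD distACard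
  | .glob, .symbols, .subset => expGlobD distSSub
  | .glob, .symbols, .card => expGlobD distSCard
  | .loc, .atoms, .subset => expLocD distASub
  | .loc, .atoms, .card => expLocD distACard
  | .loc, .symbols, .subset => expLocD distSSub
  | .loc, .symbols, .card => expLocD distSCard

/-- KB expansion `K ⊕ N` under semantics `X^y_z`. -/
def expandKB (X : LocKind) (y : MeasKind) (z : OrdKind) (K N : KB) : Set Interp :=
  expansionSet X y z (Mod K) (Mod N)

/-- KB contraction `K ⊖ N` under semantics `X^y_z`. -/
def contractKB (X : LocKind) (y : MeasKind) (z : OrdKind) (K N : KB) : Set Interp :=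
  Mod K ∪ expansionSet X y z (Mod K) (NonMod N)

/-- Union of two interpretations. -/
def Interp.union (I1 I2 : Interp) : Interp :=
  ⟨fun A => I1.concept A ∪ I2.concept A, fun P => I1.role P ∪ I2.role P⟩

/-- The support set of an interpretation. -/
def Interp.support (I : Interp) : Set Δ :=
  (⋃ A, I.concept A) ∪ (⋃ P, {o | ∃ o', (o, o') ∈ I.role P ∨ (o', o) ∈ I.role P})

/-- The image `I^f` of an interpretation under an (injective) map `f`. -/
def Interp.image (I : Interp) (f : Δ → Δ) : Interp :=
  ⟨fun A => f '' I.concept A, fun P => (fun p => (f p.1, f p.2)) '' I.role P⟩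

/-- `h` is a homomorphism from `I` to `J`. -/
def IsHom (h : Δ → Δ) (I J : Interp) : Prop :=
  (∀ A, h '' I.concept A ⊆ J.concept A) ∧
  (∀ P o o', (o, o') ∈ I.role P → (h o, h o') ∈ J.role P)

end DLLite

namespace DLLite

lemma role_support {I : Interp} {P : RoleName} {o o' : Δ} (h : (o, o') ∈ I.role P) :
    o ∈ I.support ∧ o' ∈ I.support := by
  constructor <;> exact Or.inr (Set.mem_iUnion.2 ⟨P, by first | exact ⟨o', Or.inl h⟩ | exact ⟨o, Or.inr h⟩⟩)

lemma basicRole_union (R : BasicRole) (I1 I2 : Interp) :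
    R.interp (I1.union I2) = R.interp I1 ∪ R.interp I2 := by
  cases R <;> rfl

lemma basicRole_support {R : BasicRole} {I : Interp} {o o' : Δ} (h : (o, o') ∈ R.interp I) :
    o ∈ I.support ∧ o' ∈ I.support := by
  cases R with
  | pos P => exact role_support h
  | inv P => exact (role_support h).symm

lemma basicConcept_union (B : BasicConcept) (I1 I2 : Interp) :
    B.interp (I1.union I2) = B.interp I1 ∪ B.interp I2 := by
  cases B with
  | atom A => rfl
  | ex R =>
    ext o
    simp only [BasicConcept.interp, basicRole_union, Set.mem_union, Set.mem_setOf_eq]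
    constructor
    · rintro ⟨o', h | h⟩
      · exact Or.inl ⟨o', h⟩
      · exact Or.inr ⟨o', h⟩
    · rintro (⟨o', h⟩ | ⟨o', h⟩)
      · exact ⟨o', Or.inl h⟩
      · exact ⟨o', Or.inr h⟩

lemma basicConcept_support {B : BasicConcept} {I : Interp} {o : Δ} (h : o ∈ B.interp I) :
    o ∈ I.support := by
  cases B with
  | atom A => exact Or.inl (Set.mem_iUnion.2 ⟨A, h⟩)
  | ex R => obtain ⟨o', h⟩ := h; exact (basicRole_support h).1

/-- For an inclusion or functionality assertion `α` and interpretations with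
disjoint support sets: `I1 ⊎ I2 ⊨ α` iff `I1 ⊨ α` and `I2 ⊨ α`. -/
theorem disjoint_union_sat_tbox (α : Assertion) (hα : α.isTBox)
    (I1 I2 : Interp) (hdisj : Disjoint I1.support I2.support) :
    (I1.union I2).sat α ↔ I1.sat α ∧ I2.sat α := by
  have hd : ∀ {o : Δ}, o ∈ I1.support → o ∈ I2.support → False := fun h1 h2 =>
    Set.disjoint_left.1 hdisj h1 h2
  cases α with
  | conceptIncl B1 B2 =>
    simp only [Interp.sat, basicConcept_union]
    constructor
    · intro h
      constructor
      · intro o ho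
        rcases h (Or.inl ho) with h' | h'
        · exact h'
        · exact absurd (basicConcept_support h') (fun c => hd (basicConcept_support ho) c)
      · intro o ho
        rcases h (Or.inr ho) with h' | h'
        · exact absurd (basicConcept_support h') (fun c => hd c (basicConcept_support ho))
        · exact h'
    · rintro ⟨h1, h2⟩ o (ho | ho)
      · exact Or.inl (h1 ho)
      · exact Or.inr (h2 ho)
  | conceptDisj B1 B2 =>
    simp only [Interp.sat, basicConcept_union, Set.eq_empty_iff_forall_notMem,
      Set.mem_inter_iff, Set.mem_union, not_and, not_or]
    constructor
    · intro h
      refine ⟨fun o h1 h2 => ?_, fun o h1 h2 => ?_⟩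
      · exact (h o (Or.inl h1)).1 h2
      · exact (h o (Or.inr h1)).2 h2
    · rintro ⟨h1, h2⟩ o (ha | ha)
      · exact ⟨h1 o ha, fun hb => hd (basicConcept_support ha) (basicConcept_support hb)⟩
      · exact ⟨fun hb => hd (basicConcept_support hb) (basicConcept_support ha), h2 o ha⟩
  | roleIncl R1 R2 =>
    simp only [Interp.sat, basicRole_union]
    constructor
    · intro h
      constructor
      · intro p hp
        rcases h (Or.inl hp) with h' | h'
        · exact h'
        · exact absurd (basicRole_support h').1 (fun c => hd (basicRole_support hp).1 c)
      · intro p hp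
        rcases h (Or.inr hp) with h' | h'
        · exact absurd (basicRole_support h').1 (fun c => hd c (basicRole_support hp).1)
        · exact h'
    · rintro ⟨h1, h2⟩ p (hp | hp)
      · exact Or.inl (h1 hp)
      · exact Or.inr (h2 hp)
  | roleDisj R1 R2 =>
    simp only [Interp.sat, basicRole_union, Set.eq_empty_iff_forall_notMem,
      Set.mem_inter_iff, Set.mem_union, not_and, not_or]
    constructor
    · intro h
      refine ⟨fun p h1 h2 => ?_, fun p h1 h2 => ?_⟩
      · exact (h p (Or.inl h1)).1 h2
      · exact (h p (Or.inr h1)).2 h2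
    · rintro ⟨h1, h2⟩ p (ha | ha)
      · exact ⟨h1 p ha, fun hb => hd (basicRole_support ha).1 (basicRole_support hb).1⟩
      · exact ⟨fun hb => hd (basicRole_support hb).1 (basicRole_support ha).1, h2 p ha⟩
  | funct R =>
    simp only [Interp.sat, basicRole_union, Set.mem_union]
    constructor
    · intro h
      exact ⟨fun o o1 o2 h1 h2 => h o o1 o2 (Or.inl h1) (Or.inl h2),
             fun o o1 o2 h1 h2 => h o o1 o2 (Or.inr h1) (Or.inr h2)⟩
    · rintro ⟨h1, h2⟩ o o1 o2 (ha | ha) (hb | hb)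
      · exact h1 o o1 o2 ha hb
      · exact absurd (basicRole_support hb).1 (fun c => hd (basicRole_support ha).1 c)
      · exact absurd (basicRole_support hb).1 (fun c => hd c (basicRole_support ha).1)
      · exact h2 o o1 o2 ha hb
  | memberC A a => exact absurd hα (by simp [Assertion.isTBox])
  | memberR P a b => exact absurd hα (by simp [Assertion.isTBox])

end DLLite
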